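/- Let q be prime, ψ a primitive Dirichlet character modulo q, and a, b, c, d integers with gcd(a,q) = gcd(c,q) = 1. Then ∑_{t mod q} ψ(at + b) ψ̄(ct + d) = ψ(a) ψ̄(c) r_q(ad − bc), where r_q is the Ramanujan sum modulo q. -/

import Mathlib

/-- e(x) = exp(2πix). -/
noncomputable def eC (x : ℂ) : ℂ := Complex.exp (2 * Real.pi * Complex.I * x)

/-- The Ramanujan sum modulo q, r_q(n) = ∑_{x mod q, gcd(x,q)=1} e(xn/q). -/
noncomputable def ramanujanSumZMod (q : ℕ) [NeZero q] (n : ZMod q) : ℂ :=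
  ∑ x : (ZMod q)ˣ, eC ((((x : ZMod q) * n).val : ℂ) / (q : ℂ))

open Finset in
lemma sum_eC_total (q : ℕ) [NeZero q] (hq : 1 < q) :
    ∑ t : ZMod q, eC (((t.val : ℕ) : ℂ) / (q : ℂ)) = 0 := by
  have hq0 : (q : ℕ) ≠ 0 := NeZero.ne q
  have hζ : IsPrimitiveRoot (Complex.exp (2 * Real.pi * Complex.I / q)) q :=
    Complex.isPrimitiveRoot_exp q hq0
  have key : ∀ t : ZMod q, eC (((t.val : ℕ) : ℂ) / (q : ℂ)) =
      (Complex.exp (2 * Real.pi * Complex.I / q)) ^ t.val := by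
    intro t
    rw [eC, ← Complex.exp_nat_mul]
    ring_nf
  rw [Finset.sum_congr rfl (fun t _ => key t)]
  have := hζ.geom_sum_eq_zero hq
  rw [← this]
  apply Finset.sum_nbij' (i := fun (t : ZMod q) => t.val) (j := fun (j : ℕ) => (j : ZMod q))
  · intro t _; exact Finset.mem_range.mpr (ZMod.val_lt t)
  · intro j _; exact Finset.mem_univ _
  · intro t _; simp [ZMod.natCast_val, ZMod.cast_id]
  · intro j hj; exact ZMod.val_natCast_of_lt (Finset.mem_range.mp hj)
  · intro t _; rfl

open Finset in
lemma ramanujanSumZMod_prime_eq (q : ℕ) (hq : q.Prime) [NeZero q] (n : ZMod q) :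
    ramanujanSumZMod q n = if n = 0 then (q : ℂ) - 1 else -1 := by
  haveI : Fact q.Prime := ⟨hq⟩
  split_ifs with h
  · subst h
    have : ∀ x : (ZMod q)ˣ, eC (((((x : ZMod q) * 0).val : ℕ) : ℂ) / (q : ℂ)) = 1 := by
      intro x; simp [eC]
    rw [ramanujanSumZMod, Finset.sum_congr rfl (fun x _ => this x), Finset.sum_const,
      Finset.card_univ, ZMod.card_units_eq_totient, Nat.totient_prime hq, nsmul_eq_mul, mul_one,
      Nat.cast_sub hq.one_le, Nat.cast_one]
  · -- n is a unit
    have hn : IsUnit n := isUnit_iff_ne_zero.mpr h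
    -- reindex x ↦ x * hn.unit
    have step1 : ramanujanSumZMod q n =
        ∑ u : (ZMod q)ˣ, eC ((((u : ZMod q)).val : ℂ) / (q : ℂ)) := by
      rw [ramanujanSumZMod]
      apply Fintype.sum_equiv (Equiv.mulRight hn.unit)
      intro x
      simp [hn.unit_spec]
    rw [step1]
    -- sum over units = sum over nonzero elements
    have step2 : ∑ u : (ZMod q)ˣ, eC ((((u : ZMod q)).val : ℂ) / (q : ℂ)) =
        ∑ t ∈ (Finset.univ : Finset (ZMod q)).erase 0,
          eC (((t.val : ℕ) : ℂ) / (q : ℂ)) := by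
      apply Finset.sum_nbij' (i := fun (u : (ZMod q)ˣ) => (u : ZMod q))
        (j := fun (t : ZMod q) => if ht : t = 0 then 1 else Units.mk0 t ht)
      · intro u _
        exact Finset.mem_erase.mpr ⟨u.ne_zero, Finset.mem_univ _⟩
      · intro t _; exact Finset.mem_univ _
      · intro u _
        have : (u : ZMod q) ≠ 0 := u.ne_zero
        simp only [this, dif_neg]
        exact Units.ext rfl
      · intro t ht
        have ht0 : t ≠ 0 := (Finset.mem_erase.mp ht).1
        simp [ht0]
      · intro u _; rfl
    rw [step2]
    have total := sum_eC_total q hq.one_lt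
    rw [← Finset.add_sum_erase _ _ (Finset.mem_univ (0 : ZMod q))] at total
    have h0 : eC ((((0 : ZMod q).val : ℕ) : ℂ) / (q : ℂ)) = 1 := by simp [eC]
    rw [h0] at total
    linear_combination total

open Finset in
lemma char_shift_sum (q : ℕ) (hq : q.Prime) [NeZero q]
    (ψ : DirichletCharacter ℂ q) (hψ1 : ψ ≠ 1) (m : ZMod q) :
    ∑ t : ZMod q, ψ t * ψ⁻¹ (t + m) = if m = 0 then (q : ℂ) - 1 else -1 := by
  haveI : Fact q.Prime := ⟨hq⟩
  split_ifs with h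
  · subst h
    have key : ∀ t : ZMod q, ψ t * ψ⁻¹ (t + 0) = if t = 0 then 0 else 1 := by
      intro t
      rw [add_zero, MulChar.inv_apply', ← map_mul]
      rcases eq_or_ne t 0 with h0 | h0
      · rw [h0, zero_mul, MulChar.map_zero, if_pos rfl]
      · rw [mul_inv_cancel₀ h0, map_one, if_neg h0]
    rw [Finset.sum_congr rfl (fun t _ => key t),
      ← Finset.add_sum_erase _ _ (Finset.mem_univ (0 : ZMod q)), if_pos rfl, zero_add]
    have : ∀ t ∈ (Finset.univ : Finset (ZMod q)).erase 0,
        (if t = 0 then (0 : ℂ) else 1) = 1 := by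
      intro t ht; rw [if_neg (Finset.mem_erase.mp ht).1]
    rw [Finset.sum_congr rfl this, Finset.sum_const, nsmul_eq_mul, mul_one,
      Finset.card_erase_of_mem (Finset.mem_univ _), Finset.card_univ, ZMod.card,
      Nat.cast_sub hq.one_le, Nat.cast_one]
  · -- reindex t ↦ m * t
    have step1 : ∑ t : ZMod q, ψ t * ψ⁻¹ (t + m) =
        ∑ t : ZMod q, ψ (m * t) * ψ⁻¹ (m * t + m) := by
      refine (Fintype.sum_equiv (Equiv.mulLeft₀ m h) _ _ ?_).symm
      intro t; rfl
    have hmm : ψ m * ψ⁻¹ m = 1 := by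
      rw [MulChar.inv_apply', ← map_mul, mul_inv_cancel₀ h, map_one]
    have step2 : ∀ t : ZMod q, ψ (m * t) * ψ⁻¹ (m * t + m) = ψ t * ψ⁻¹ (t + 1) := by
      intro t
      have : m * t + m = m * (t + 1) := by ring
      rw [this, map_mul, map_mul]
      calc ψ m * ψ t * (ψ⁻¹ m * ψ⁻¹ (t + 1))
          = (ψ m * ψ⁻¹ m) * (ψ t * ψ⁻¹ (t + 1)) := by ring
        _ = ψ t * ψ⁻¹ (t + 1) := by rw [hmm, one_mul]
    have hsq : ψ (-1) * ψ (-1) = 1 := by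
      rw [← map_mul]; norm_num
    have step3 : ∑ t : ZMod q, ψ t * ψ⁻¹ (t + 1) =
        ψ (-1) * jacobiSum ψ ψ⁻¹ := by
      rw [jacobiSum, Finset.mul_sum,
        ← Equiv.sum_comp (Equiv.neg (ZMod q)) (fun t => ψ t * ψ⁻¹ (t + 1))]
      refine Finset.sum_congr rfl fun t _ => ?_
      simp only [Equiv.neg_apply]
      rw [show (-t : ZMod q) = (-1) * t from by ring, map_mul ψ,
        show ((-1 : ZMod q) * t + 1) = 1 - t from by ring]
      ring
    rw [step1, Finset.sum_congr rfl (fun t _ => step2 t), step3,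
      jacobiSum_nontrivial_inv hψ1]
    linear_combination -hsq

/-- Lemma 2.2, second part.  The conjugate character `ψ̄` is the inverse character `ψ⁻¹`. -/
theorem character_sum_eval_conj (q : ℕ) (hq : q.Prime) [NeZero q]
    (ψ : DirichletCharacter ℂ q) (hψ : ψ.IsPrimitive)
    (a b c d : ZMod q) (ha : IsUnit a) (hc : IsUnit c) :
    ∑ t : ZMod q, ψ (a * t + b) * ψ⁻¹ (c * t + d) =
      ψ a * ψ⁻¹ c * ramanujanSumZMod q (a * d - b * c) := by
  haveI : Fact q.Prime := ⟨hq⟩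
  have ha0 : a ≠ 0 := ha.ne_zero
  have hc0 : c ≠ 0 := hc.ne_zero
  have hψ1 : ψ ≠ 1 := by
    intro h
    have := hψ
    rw [DirichletCharacter.isPrimitive_def, h,
      DirichletCharacter.conductor_one] at this
    exact hq.one_lt.ne' this.symm
  set m : ZMod q := c⁻¹ * (a * d - b * c) with hm
  -- reindex u = a * t + b
  have step1 : ∑ t : ZMod q, ψ (a * t + b) * ψ⁻¹ (c * t + d) =
      ψ⁻¹ (c * a⁻¹) * ∑ u : ZMod q, ψ u * ψ⁻¹ (u + m) := by
    rw [Finset.mul_sum]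
    refine Fintype.sum_equiv
      ⟨fun t => a * t + b, fun u => a⁻¹ * (u - b), fun t => by field_simp; ring,
        fun u => by field_simp; ring⟩
      (fun t => ψ (a * t + b) * ψ⁻¹ (c * t + d))
      (fun u => ψ⁻¹ (c * a⁻¹) * (ψ u * ψ⁻¹ (u + m))) fun t => ?_
    simp only [Equiv.coe_fn_mk]
    have e1 : c * t + d = c * a⁻¹ * ((a * t + b) + m) := by
      field_simp [hm]
      linear_combination -(a * d - b * c) * mul_inv_cancel₀ hc0
    rw [e1, map_mul (ψ⁻¹ : DirichletCharacter ℂ q)]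
    ring
  rw [step1, char_shift_sum q hq ψ hψ1 m]
  have e2 : ψ⁻¹ (c * a⁻¹) = ψ a * ψ⁻¹ c := by
    rw [MulChar.inv_apply', MulChar.inv_apply', mul_inv, inv_inv, map_mul, mul_comm]
  have e3 : (m = 0) ↔ (a * d - b * c = 0) := by
    rw [hm, mul_eq_zero, inv_eq_zero]
    simp [hc0]
  rw [e2, ramanujanSumZMod_prime_eq q hq]
  by_cases h : a * d - b * c = 0
  · rw [if_pos (e3.mpr h), if_pos h]
  · rw [if_neg (fun hh => e3.mp hh |> h), if_neg h]
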